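/- Let C : ℕ → ℝ be a sequence with C(0) = 0 such that for every z ∈ (0,1/4) the series ∑_{p≥1} C(p)·z^p converges with sum (3/2)·z/√(π·(1-z)·(1-4z)³). Then 4^{-p}·p^{-1/2}·C(p) converges to √3/(2π) as p → ∞; equivalently, C(p) ~ (√3/(2π))·4^p·√p. -/

import Mathlib

open Finset

noncomputable def cb (n : ℕ) : ℝ := (Nat.centralBinom n : ℝ)

lemma cb_pos (n : ℕ) : 0 < cb n := by
  have := Nat.centralBinom_pos n
  simp only [cb]
  exact_mod_cast this

lemma cb_rec (n : ℕ) : ((n : ℝ) + 1) * cb (n + 1) = 2 * (2 * n + 1) * cb n := by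
  have h2 : ((n + 1) * Nat.centralBinom (n + 1) : ℝ)
      = (2 * (2 * n + 1) * Nat.centralBinom n : ℝ) := by
    exact_mod_cast congrArg (Nat.cast : ℕ → ℝ) (Nat.succ_mul_centralBinom_succ n)
  simp only [cb]
  push_cast at h2 ⊢
  linarith

lemma cb_zero : cb 0 = 1 := by simp [cb, Nat.centralBinom]

lemma sym_aux (n : ℕ) :
    2 * ∑ k ∈ range (n + 1), (k : ℝ) * cb k * cb (n - k)
      = (n : ℝ) * ∑ k ∈ range (n + 1), cb k * cb (n - k) := by
  have hrefl : ∑ k ∈ range (n + 1), (k : ℝ) * cb k * cb (n - k)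
      = ∑ k ∈ range (n + 1), ((n - k : ℕ) : ℝ) * cb (n - k) * cb k := by
    rw [← Finset.sum_range_reflect (fun k => (k : ℝ) * cb k * cb (n - k)) (n + 1)]
    apply Finset.sum_congr rfl
    intro j hj
    have hj' : j ≤ n := Nat.lt_succ_iff.mp (Finset.mem_range.mp hj)
    have h1 : n + 1 - 1 - j = n - j := by omega
    have h2 : n - (n - j) = j := by omega
    rw [h1, h2]
  rw [two_mul]
  nth_rewrite 2 [hrefl]
  rw [← Finset.sum_add_distrib, Finset.mul_sum]
  apply Finset.sum_congr rfl
  intro k hk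
  have hk' : k ≤ n := Nat.lt_succ_iff.mp (Finset.mem_range.mp hk)
  rw [Nat.cast_sub hk']
  ring

/-- `∑ cb k * cb (n-k) = 4^n`. -/
lemma T_ident (n : ℕ) :
    ∑ k ∈ range (n + 1), cb k * cb (n - k) = 4 ^ n := by
  induction n with
  | zero => simp [cb_zero]
  | succ n ih =>
    have key : ((n : ℝ) + 1) * ∑ k ∈ range (n + 2), cb k * cb (n + 1 - k)
        = 2 * ∑ k ∈ range (n + 2), (k : ℝ) * cb k * cb (n + 1 - k) := by
      have := sym_aux (n + 1)
      push_cast at this ⊢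
      linarith
    have A_eq : ∑ k ∈ range (n + 2), (k : ℝ) * cb k * cb (n + 1 - k)
        = ∑ j ∈ range (n + 1), 2 * (2 * j + 1) * cb j * cb (n - j) := by
      rw [Finset.sum_range_succ' (fun k => (k : ℝ) * cb k * cb (n + 1 - k)) (n + 1)]
      simp only [Nat.cast_zero, zero_mul, add_zero]
      apply Finset.sum_congr rfl
      intro j hj
      have h1 : n + 1 - (j + 1) = n - j := by omega
      rw [h1]
      have h := congrArg (fun x => x * cb (n - j)) (cb_rec j)
      push_cast at h ⊢
      linarith
    have A_val : ∑ j ∈ range (n + 1), 2 * (2 * (j : ℝ) + 1) * cb j * cb (n - j)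
        = 2 * ((n : ℝ) + 1) * ∑ k ∈ range (n + 1), cb k * cb (n - k) := by
      have hU := sym_aux n
      have expand : ∑ j ∈ range (n + 1), 2 * (2 * (j : ℝ) + 1) * cb j * cb (n - j)
          = 4 * (∑ j ∈ range (n + 1), (j : ℝ) * cb j * cb (n - j))
            + 2 * ∑ j ∈ range (n + 1), cb j * cb (n - j) := by
        rw [Finset.mul_sum, Finset.mul_sum, ← Finset.sum_add_distrib]
        apply Finset.sum_congr rfl
        intro k _
        ring
      rw [expand]
      linarith
    have hpos : (0 : ℝ) < (n : ℝ) + 1 := by positivity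
    have : ((n : ℝ) + 1) * ∑ k ∈ range (n + 2), cb k * cb (n + 1 - k)
        = ((n : ℝ) + 1) * (4 * 4 ^ n) := by
      rw [key, A_eq, A_val, ih]; ring
    have := mul_left_cancel₀ (ne_of_gt hpos) this
    rw [this]; ring

/-- `∑ 4^k * cb (n-k) = (2n+1) * cb n`. -/
lemma S_ident (n : ℕ) :
    ∑ k ∈ range (n + 1), (4 : ℝ) ^ k * cb (n - k) = (2 * n + 1) * cb n := by
  induction n with
  | zero => simp [cb_zero]
  | succ n ih =>
    rw [Finset.sum_range_succ' (fun k => (4 : ℝ) ^ k * cb (n + 1 - k)) (n + 1)]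
    simp only [pow_zero, one_mul, Nat.sub_zero]
    have h1 : ∑ i ∈ range (n + 1), (4 : ℝ) ^ (i + 1) * cb (n + 1 - (i + 1))
        = 4 * ∑ k ∈ range (n + 1), (4 : ℝ) ^ k * cb (n - k) := by
      rw [Finset.mul_sum]
      apply Finset.sum_congr rfl
      intro j _
      have : n + 1 - (j + 1) = n - j := by omega
      rw [this]; ring
    rw [h1, ih]
    have := cb_rec n
    push_cast at this ⊢
    nlinarith [this]

/-- Master bound: `(2n+1) * cb n ^ 2 ≤ 16 ^ n`. -/
lemma cb_sq_bound (n : ℕ) : (2 * (n : ℝ) + 1) * cb n ^ 2 ≤ 16 ^ n := by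
  induction n with
  | zero => simp [cb_zero]
  | succ n ih =>
    have hrec := cb_rec n
    have h1 : ((n : ℝ) + 1) ^ 2 * cb (n + 1) ^ 2 = 4 * (2 * n + 1) ^ 2 * cb n ^ 2 := by
      linear_combination (((n : ℝ) + 1) * cb (n + 1) + 2 * (2 * (n:ℝ) + 1) * cb n) * hrec
    have hpos : (0 : ℝ) < ((n : ℝ) + 1) ^ 2 := by positivity
    have ha : (0 : ℝ) ≤ (2 * (n : ℝ) + 1) * cb n ^ 2 := by positivity
    have key : ((n : ℝ) + 1) ^ 2 * ((2 * ((n : ℝ) + 1) + 1) * cb (n + 1) ^ 2)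
        ≤ ((n : ℝ) + 1) ^ 2 * (16 * 16 ^ n) := by
      calc ((n : ℝ) + 1) ^ 2 * ((2 * ((n : ℝ) + 1) + 1) * cb (n + 1) ^ 2)
          = (2 * (n : ℝ) + 3) * (((n : ℝ) + 1) ^ 2 * cb (n + 1) ^ 2) := by ring
        _ = (2 * (n : ℝ) + 3) * (4 * (2 * n + 1) ^ 2 * cb n ^ 2) := by rw [h1]
        _ = (4 * (2 * (n : ℝ) + 1) * (2 * n + 3)) * ((2 * n + 1) * cb n ^ 2) := by ring
        _ ≤ (4 * (2 * (n : ℝ) + 2) ^ 2) * ((2 * n + 1) * cb n ^ 2) := by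
            apply mul_le_mul_of_nonneg_right _ ha
            nlinarith
        _ ≤ (4 * (2 * (n : ℝ) + 2) ^ 2) * 16 ^ n := by
            apply mul_le_mul_of_nonneg_left ih (by positivity)
        _ = ((n : ℝ) + 1) ^ 2 * (16 * 16 ^ n) := by ring
    have h2 := le_of_mul_le_mul_left key hpos
    push_cast
    rw [pow_succ (16:ℝ) n]
    linarith

lemma cb_le_four_pow (n : ℕ) : cb n ≤ 4 ^ n := by
  have h := cb_sq_bound n
  have h0 : (1 : ℝ) ≤ 2 * n + 1 := by
    have := Nat.cast_nonneg (α := ℝ) n; linarith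
  have h1 : cb n ^ 2 ≤ ((4 : ℝ) ^ n) ^ 2 := by
    have h2 : ((4 : ℝ) ^ n) ^ 2 = 16 ^ n := by
      rw [← pow_mul, mul_comm, pow_mul]; norm_num
    nlinarith [sq_nonneg (cb n)]
  have h3 := Real.sqrt_le_sqrt h1
  rwa [Real.sqrt_sq (cb_pos n).le, Real.sqrt_sq (by positivity : (0:ℝ) ≤ (4:ℝ)^n)] at h3

/-- `(2m+1) * cb m / 4^m ≤ √(2m+1)`. -/
lemma g_bound (m : ℕ) : (2 * (m : ℝ) + 1) * cb m / 4 ^ m ≤ Real.sqrt (2 * m + 1) := by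
  have h := cb_sq_bound m
  have h16 : ((4 : ℝ) ^ m) ^ 2 = 16 ^ m := by rw [← pow_mul, mul_comm, pow_mul]; norm_num
  have hpos : (0 : ℝ) < 4 ^ m := by positivity
  have hsq : ((2 * (m : ℝ) + 1) * cb m / 4 ^ m) ^ 2 ≤ (Real.sqrt (2 * m + 1)) ^ 2 := by
    rw [Real.sq_sqrt (by positivity : (0:ℝ) ≤ 2 * (m:ℝ) + 1)]
    rw [div_pow, div_le_iff₀ (by positivity)]
    calc ((2 * (m : ℝ) + 1) * cb m) ^ 2 = (2 * m + 1) * ((2 * m + 1) * cb m ^ 2) := by ring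
      _ ≤ (2 * (m : ℝ) + 1) * 16 ^ m := by
          apply mul_le_mul_of_nonneg_left h (by positivity)
      _ = (2 * (m : ℝ) + 1) * ((4 : ℝ) ^ m) ^ 2 := by rw [h16]
  have := Real.sqrt_le_sqrt hsq
  rwa [Real.sqrt_sq (div_nonneg (mul_nonneg (by positivity) (cb_pos m).le) (by positivity)),
    Real.sqrt_sq (Real.sqrt_nonneg _)] at this

lemma summable_norm_cb_mul {t : ℝ} (h0 : 0 ≤ t) (h : t < 1 / 4) :
    Summable fun n => ‖cb n * t ^ n‖ := by
  apply Summable.of_nonneg_of_le (fun n => norm_nonneg _) (fun n => ?_)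
    (summable_geometric_of_lt_one (by positivity) (by linarith) :
      Summable fun n => (4 * t) ^ n)
  rw [Real.norm_eq_abs, abs_of_nonneg (mul_nonneg (cb_pos n).le (pow_nonneg h0 n)), mul_pow]
  exact mul_le_mul_of_nonneg_right (cb_le_four_pow n) (pow_nonneg h0 n)

lemma summable_norm_D_mul {t : ℝ} (h0 : 0 ≤ t) (h : t < 1 / 4) :
    Summable fun n : ℕ => ‖(2 * (n : ℝ) + 1) * cb n * t ^ n‖ := by
  have hs : Summable fun n : ℕ => (2 * (n : ℝ) + 1) * (4 * t) ^ n := by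
    have h1 : Summable fun n : ℕ => (n : ℝ) ^ 1 * (4 * t) ^ n := by
      apply summable_pow_mul_geometric_of_norm_lt_one
      rw [Real.norm_eq_abs, abs_of_nonneg (by positivity)]; linarith
    simp only [pow_one] at h1
    have h2 : Summable fun n : ℕ => (4 * t) ^ n :=
      summable_geometric_of_lt_one (by positivity) (by linarith)
    exact ((h1.mul_left 2).add h2).congr (fun n => by ring)
  apply Summable.of_nonneg_of_le (fun n => norm_nonneg _) (fun n => ?_) hs
  rw [Real.norm_eq_abs, abs_of_nonneg
    (mul_nonneg (mul_nonneg (by positivity) (cb_pos n).le) (pow_nonneg h0 n)), mul_pow]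
  rw [mul_assoc]
  apply mul_le_mul_of_nonneg_left _ (by positivity)
  exact mul_le_mul_of_nonneg_right (cb_le_four_pow n) (pow_nonneg h0 n)

lemma hasSum_B {t : ℝ} (h0 : 0 ≤ t) (h : t < 1 / 4) :
    HasSum (fun n => cb n * t ^ n) (1 / Real.sqrt (1 - 4 * t)) := by
  have hsum := (summable_norm_cb_mul h0 h).of_norm
  set S := ∑' n, cb n * t ^ n with hS
  have hB : HasSum (fun n => cb n * t ^ n) S := hsum.hasSum
  have hprod := hasSum_sum_range_mul_of_summable_norm
    (summable_norm_cb_mul h0 h) (summable_norm_cb_mul h0 h)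
  have hconv : ∀ n : ℕ, (∑ k ∈ Finset.range (n + 1), (cb k * t ^ k) * (cb (n - k) * t ^ (n - k)))
      = (4 * t) ^ n := by
    intro n
    have : ∀ k ∈ Finset.range (n + 1), (cb k * t ^ k) * (cb (n - k) * t ^ (n - k))
        = cb k * cb (n - k) * t ^ n := by
      intro k hk
      have hk' : k ≤ n := Nat.lt_succ_iff.mp (Finset.mem_range.mp hk)
      rw [show cb k * t ^ k * (cb (n - k) * t ^ (n - k)) = cb k * cb (n - k) * (t ^ k * t ^ (n - k)) by ring,
        ← pow_add, Nat.add_sub_cancel' hk']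
    rw [Finset.sum_congr rfl this, ← Finset.sum_mul, T_ident, mul_pow]
  rw [show ((∑' n, cb n * t ^ n) * ∑' n, cb n * t ^ n) = S * S from rfl] at hprod
  have hgeo : HasSum (fun n : ℕ => (4 * t) ^ n) (1 - 4 * t)⁻¹ :=
    hasSum_geometric_of_lt_one (by positivity) (by linarith)
  have hSS : S * S = (1 - 4 * t)⁻¹ := by
    exact (hprod.congr_fun (fun n => (hconv n).symm)).unique hgeo
  have hSpos : 0 < S := by
    have h1 : (1 : ℝ) ≤ S := by
      have := hB.tsum_eq
      calc (1 : ℝ) = cb 0 * t ^ 0 := by simp [cb_zero]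
        _ ≤ S := hsum.le_tsum 0 (fun j _ => mul_nonneg (cb_pos j).le (pow_nonneg h0 j))
    linarith
  have h4t : (0 : ℝ) < 1 - 4 * t := by linarith
  have hsq : 0 < Real.sqrt (1 - 4 * t) := Real.sqrt_pos.mpr h4t
  have hkey : (S * Real.sqrt (1 - 4 * t)) * (S * Real.sqrt (1 - 4 * t)) = 1 := by
    have hss : Real.sqrt (1 - 4 * t) * Real.sqrt (1 - 4 * t) = 1 - 4 * t :=
      Real.mul_self_sqrt h4t.le
    calc (S * Real.sqrt (1 - 4 * t)) * (S * Real.sqrt (1 - 4 * t))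
        = (S * S) * (Real.sqrt (1 - 4 * t) * Real.sqrt (1 - 4 * t)) := by ring
      _ = (1 - 4 * t)⁻¹ * (1 - 4 * t) := by rw [hSS, hss]
      _ = 1 := inv_mul_cancel₀ (ne_of_gt h4t)
  have : S * Real.sqrt (1 - 4 * t) = 1 := by
    rcases mul_self_eq_one_iff.mp hkey with h1 | h1
    · exact h1
    · nlinarith
  have hSval : S = 1 / Real.sqrt (1 - 4 * t) := by
    field_simp at this ⊢
    linarith
  rwa [hSval] at hB

lemma hasSum_D {t : ℝ} (h0 : 0 ≤ t) (h : t < 1 / 4) :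
    HasSum (fun n : ℕ => (2 * (n : ℝ) + 1) * cb n * t ^ n)
      ((1 - 4 * t)⁻¹ * (1 / Real.sqrt (1 - 4 * t))) := by
  have h4t : (0 : ℝ) < 1 - 4 * t := by linarith
  have hgeo_norm : Summable fun n : ℕ => ‖(4 * t) ^ n‖ := by
    simp only [norm_pow, Real.norm_eq_abs, abs_of_nonneg (by positivity : (0:ℝ) ≤ 4 * t)]
    exact summable_geometric_of_lt_one (by positivity) (by linarith)
  have hprod := hasSum_sum_range_mul_of_summable_norm hgeo_norm (summable_norm_cb_mul h0 h)
  have hgeo : (∑' n : ℕ, (4 * t) ^ n) = (1 - 4 * t)⁻¹ :=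
    (hasSum_geometric_of_lt_one (by positivity) (by linarith)).tsum_eq
  have hBt : (∑' n, cb n * t ^ n) = 1 / Real.sqrt (1 - 4 * t) := (hasSum_B h0 h).tsum_eq
  rw [hgeo, hBt] at hprod
  apply hprod.congr_fun
  intro n
  have : ∀ k ∈ Finset.range (n + 1), (4 * t) ^ k * (cb (n - k) * t ^ (n - k))
      = 4 ^ k * cb (n - k) * t ^ n := by
    intro k hk
    have hk' : k ≤ n := Nat.lt_succ_iff.mp (Finset.mem_range.mp hk)
    rw [mul_pow, show (4:ℝ) ^ k * t ^ k * (cb (n - k) * t ^ (n - k))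
      = 4 ^ k * cb (n - k) * (t ^ k * t ^ (n - k)) by ring, ← pow_add, Nat.add_sub_cancel' hk']
  rw [Finset.sum_congr rfl this, ← Finset.sum_mul, S_ident]

open Real in
noncomputable def Ew (n : ℕ) : ℝ :=
  ∑ k ∈ range (n + 1), (cb k / 4 ^ k) * ((2 * ((n - k : ℕ) : ℝ) + 1) * cb (n - k))

open Real in
noncomputable def EE : ℕ → ℝ
  | 0 => 0
  | n + 1 => 3 / (2 * Real.sqrt π) * Ew n

lemma hasSum_Ew {z : ℝ} (hz : z ∈ Set.Ioo (0 : ℝ) (1 / 4)) :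
    HasSum (fun n => Ew n * z ^ n)
      ((1 / Real.sqrt (1 - z)) * ((1 - 4 * z)⁻¹ * (1 / Real.sqrt (1 - 4 * z)))) := by
  obtain ⟨hz0, hz4⟩ := hz
  have hq0 : (0 : ℝ) ≤ z / 4 := by linarith
  have hq4 : z / 4 < 1 / 4 := by linarith
  -- the two factor series
  have hf_norm : Summable fun k => ‖cb k * (z / 4) ^ k‖ := summable_norm_cb_mul hq0 hq4
  have hg_norm : Summable fun n : ℕ => ‖(2 * (n : ℝ) + 1) * cb n * z ^ n‖ :=
    summable_norm_D_mul hz0.le hz4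
  have hprod := hasSum_sum_range_mul_of_summable_norm hf_norm hg_norm
  have hf : (∑' k, cb k * (z / 4) ^ k) = 1 / Real.sqrt (1 - 4 * (z / 4)) :=
    (hasSum_B hq0 hq4).tsum_eq
  have hz' : 1 - 4 * (z / 4) = 1 - z := by ring
  rw [hz'] at hf
  have hg : (∑' n : ℕ, (2 * (n : ℝ) + 1) * cb n * z ^ n)
      = (1 - 4 * z)⁻¹ * (1 / Real.sqrt (1 - 4 * z)) := (hasSum_D hz0.le hz4).tsum_eq
  rw [hf, hg] at hprod
  apply hprod.congr_fun
  intro n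
  rw [Ew, Finset.sum_mul]
  apply Finset.sum_congr rfl
  intro k hk
  have hk' : k ≤ n := Nat.lt_succ_iff.mp (Finset.mem_range.mp hk)
  have hzk : (z / 4) ^ k = z ^ k / 4 ^ k := div_pow z 4 k
  rw [hzk]
  rw [show cb k / 4 ^ k * ((2 * ((n - k : ℕ) : ℝ) + 1) * cb (n - k)) * z ^ n
    = cb k * (2 * ((n - k : ℕ) : ℝ) + 1) * cb (n - k) / 4 ^ k * z ^ n by ring]
  rw [show cb k * (z ^ k / 4 ^ k) * ((2 * ((n - k : ℕ) : ℝ) + 1) * cb (n - k) * z ^ (n - k))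
    = cb k * (2 * ((n - k : ℕ) : ℝ) + 1) * cb (n - k) / 4 ^ k * (z ^ k * z ^ (n - k)) by ring]
  rw [← pow_add, Nat.add_sub_cancel' hk']

lemma hasSum_EE {z : ℝ} (hz : z ∈ Set.Ioo (0 : ℝ) (1 / 4)) :
    HasSum (fun p : ℕ => EE p * z ^ p)
      ((3 / 2) * z / Real.sqrt (Real.pi * (1 - z) * (1 - 4 * z) ^ 3)) := by
  obtain ⟨hz0, hz4⟩ := hz
  have hz1 : (0 : ℝ) < 1 - z := by linarith
  have h4z : (0 : ℝ) < 1 - 4 * z := by linarith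
  set P := (1 / Real.sqrt (1 - z)) * ((1 - 4 * z)⁻¹ * (1 / Real.sqrt (1 - 4 * z))) with hP
  have h1 : HasSum (fun n => EE (n + 1) * z ^ (n + 1))
      (3 / (2 * Real.sqrt Real.pi) * z * P) := by
    have := ((hasSum_Ew ⟨hz0, hz4⟩).mul_left (3 / (2 * Real.sqrt Real.pi) * z))
    apply this.congr_fun
    intro n
    show EE (n + 1) * z ^ (n + 1) = _
    rw [show EE (n + 1) = 3 / (2 * Real.sqrt Real.pi) * Ew n from rfl, pow_succ]
    ring
  have h2 : HasSum (fun p : ℕ => EE p * z ^ p)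
      (3 / (2 * Real.sqrt Real.pi) * z * P + ∑ i ∈ range 1, EE i * z ^ i) := by
    exact (hasSum_nat_add_iff 1).mp h1
  have h3 : (∑ i ∈ range 1, EE i * z ^ i) = 0 := by
    simp [show EE 0 = 0 from rfl]
  rw [h3, add_zero] at h2
  have hsqrt : Real.sqrt (Real.pi * (1 - z) * (1 - 4 * z) ^ 3)
      = Real.sqrt Real.pi * Real.sqrt (1 - z) * ((1 - 4 * z) * Real.sqrt (1 - 4 * z)) := by
    rw [Real.sqrt_mul (by positivity) ((1 - 4 * z) ^ 3),
      Real.sqrt_mul Real.pi_pos.le (1 - z),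
      show (1 - 4 * z) ^ 3 = (1 - 4 * z) ^ 2 * (1 - 4 * z) by ring,
      Real.sqrt_mul (sq_nonneg _) (1 - 4 * z), Real.sqrt_sq h4z.le]
  have hval : 3 / (2 * Real.sqrt Real.pi) * z * P
      = (3 / 2) * z / Real.sqrt (Real.pi * (1 - z) * (1 - 4 * z) ^ 3) := by
    rw [hsqrt, hP]
    have hsp : (0 : ℝ) < Real.sqrt Real.pi := Real.sqrt_pos.mpr Real.pi_pos
    have hs1 : (0 : ℝ) < Real.sqrt (1 - z) := Real.sqrt_pos.mpr hz1
    have hs4 : (0 : ℝ) < Real.sqrt (1 - 4 * z) := Real.sqrt_pos.mpr h4z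
    field_simp
  rwa [hval] at h2

lemma coeff_eq_zero (d : ℕ → ℝ)
    (h : ∀ z ∈ Set.Ioo (0 : ℝ) (1 / 4), HasSum (fun p => d p * z ^ p) 0) :
    ∀ n, d n = 0 := by
  -- a uniform bound at z = 1/8
  have h8 : (1 / 8 : ℝ) ∈ Set.Ioo (0 : ℝ) (1 / 4) := by norm_num
  have hsum8 := (h _ h8).summable
  have htend : Filter.Tendsto (fun p => |d p * (1 / 8 : ℝ) ^ p|) Filter.atTop (nhds 0) := by
    have := hsum8.tendsto_atTop_zero
    simpa using this.abs
  obtain ⟨M, hM⟩ := htend.bddAbove_range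
  have hM' : ∀ p, |d p| * (1 / 8 : ℝ) ^ p ≤ M := by
    intro p
    have := hM (Set.mem_range_self p)
    rwa [abs_mul, abs_of_nonneg (by positivity : (0:ℝ) ≤ (1/8:ℝ)^p)] at this
  have hM0 : 0 ≤ M := le_trans (by positivity) (hM' 0)
  intro n
  induction n using Nat.strong_induction_on with
  | _ n IH =>
    set K := 2 * M * 8 ^ (n + 1) with hK
    have hK0 : 0 ≤ K := by positivity
    have key : ∀ z : ℝ, 0 < z → z ≤ 1 / 16 → |d n| ≤ K * z := by
      intro z hz0 hz16
      have hz : z ∈ Set.Ioo (0 : ℝ) (1 / 4) := ⟨hz0, by linarith⟩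
      have h8z0 : (0 : ℝ) ≤ 8 * z := by linarith
      have h8z : 8 * z ≤ 1 / 2 := by linarith
      have hf := h z hz
      have htail : HasSum (fun p => d (p + (n + 1)) * z ^ (p + (n + 1)))
          (0 - ∑ i ∈ range (n + 1), d i * z ^ i) := by
        exact (hasSum_nat_add_iff' (n + 1)).mpr hf
      have hhead : (∑ i ∈ range (n + 1), d i * z ^ i) = d n * z ^ n := by
        rw [Finset.sum_range_succ]
        have : ∀ i ∈ range n, d i * z ^ i = 0 := by
          intro i hi
          rw [IH i (Finset.mem_range.mp hi), zero_mul]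
        rw [Finset.sum_congr rfl this, Finset.sum_const_zero, zero_add]
      rw [hhead, zero_sub] at htail
      -- geometric bound
      have hgeo : HasSum (fun p : ℕ => M * (8 * z) ^ (n + 1) * (8 * z) ^ p)
          (M * (8 * z) ^ (n + 1) * (1 - 8 * z)⁻¹) :=
        (hasSum_geometric_of_lt_one h8z0 (by linarith)).mul_left _
      have hgeo' : HasSum (fun p : ℕ => M * (8 * z) ^ (p + (n + 1)))
          (M * (8 * z) ^ (n + 1) * (1 - 8 * z)⁻¹) := by
        apply hgeo.congr_fun
        intro p
        rw [pow_add]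
        ring
      have hbound : ∀ p : ℕ, ‖d (p + (n + 1)) * z ^ (p + (n + 1))‖
          ≤ M * (8 * z) ^ (p + (n + 1)) := by
        intro p
        set q := p + (n + 1)
        rw [Real.norm_eq_abs, abs_mul, abs_of_nonneg (pow_nonneg hz0.le q)]
        have e1 : z ^ q = (1 / 8 : ℝ) ^ q * (8 * z) ^ q := by
          rw [← mul_pow]
          congr 1
          ring
        rw [e1, ← mul_assoc]
        exact mul_le_mul_of_nonneg_right (hM' q) (pow_nonneg h8z0 q)
      have htsum : ‖∑' p, d (p + (n + 1)) * z ^ (p + (n + 1))‖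
          ≤ M * (8 * z) ^ (n + 1) * (1 - 8 * z)⁻¹ :=
        tsum_of_norm_bounded hgeo' hbound
      rw [htail.tsum_eq, norm_neg, Real.norm_eq_abs, abs_mul,
        abs_of_nonneg (pow_nonneg hz0.le n)] at htsum
      -- now |d n| * z^n ≤ M (8z)^{n+1} (1-8z)⁻¹ ≤ 2 M (8z)^{n+1}
      have hinv : (1 - 8 * z)⁻¹ ≤ 2 := by
        rw [inv_le_comm₀ (by linarith) (by norm_num)]
        linarith
      have h2 : |d n| * z ^ n ≤ 2 * (M * (8 * z) ^ (n + 1)) := by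
        calc |d n| * z ^ n ≤ M * (8 * z) ^ (n + 1) * (1 - 8 * z)⁻¹ := htsum
          _ ≤ M * (8 * z) ^ (n + 1) * 2 :=
              mul_le_mul_of_nonneg_left hinv (by positivity)
          _ = 2 * (M * (8 * z) ^ (n + 1)) := by ring
      have h3 : 2 * (M * (8 * z) ^ (n + 1)) = K * z * z ^ n := by
        rw [hK, mul_pow, pow_succ z n]
        ring
      rw [h3] at h2
      exact le_of_mul_le_mul_right h2 (by positivity)
    by_contra hdn
    have habs : 0 < |d n| := abs_pos.mpr hdn
    set z := min (|d n| / (2 * (K + 1))) (1 / 16) with hz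
    have hz0 : 0 < z := lt_min (by positivity) (by norm_num)
    have h1 := key z hz0 (min_le_right _ _)
    have h2 : K * z ≤ K * (|d n| / (2 * (K + 1))) :=
      mul_le_mul_of_nonneg_left (min_le_left _ _) hK0
    have h3 : K * (|d n| / (2 * (K + 1))) < |d n| := by
      have hlt : K / (2 * (K + 1)) < 1 := by
        rw [div_lt_one (by positivity)]; linarith
      calc K * (|d n| / (2 * (K + 1))) = |d n| * (K / (2 * (K + 1))) := by ring
        _ < |d n| * 1 := mul_lt_mul_of_pos_left hlt habs
        _ = |d n| := mul_one _
    linarith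

open Stirling in
lemma cb_stirling_eq {n : ℕ} (hn : 1 ≤ n) :
    stirlingSeq (2 * n) / (stirlingSeq n) ^ 2 = cb n * Real.sqrt n / 4 ^ n := by
  have hfac : ((2 * n).factorial : ℝ) = cb n * ((n.factorial : ℝ)) ^ 2 := by
    have h := Nat.choose_mul_factorial_mul_factorial (show n ≤ 2 * n by omega)
    have h2 : 2 * n - n = n := by omega
    rw [h2] at h
    have : ((2 * n).choose n * n.factorial * n.factorial : ℝ) = ((2 * n).factorial : ℝ) := by
      exact_mod_cast congrArg (Nat.cast : ℕ → ℝ) h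
    rw [cb, Nat.centralBinom]
    nlinarith [this]
  have hn0 : (0 : ℝ) < (n : ℝ) := by exact_mod_cast hn
  set s := Real.sqrt n with hs
  have hs0 : 0 < s := Real.sqrt_pos.mpr hn0
  have hss : s * s = (n : ℝ) := Real.mul_self_sqrt hn0.le
  have he : (0 : ℝ) < Real.exp 1 := Real.exp_pos 1
  have hfn : (0 : ℝ) < (n.factorial : ℝ) := by exact_mod_cast n.factorial_pos
  have hpow : (0 : ℝ) < ((n : ℝ) / Real.exp 1) ^ n := by positivity
  rw [stirlingSeq, stirlingSeq, Nat.cast_mul, Nat.cast_ofNat]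
  have hsqrt2 : Real.sqrt (2 * (2 * (n : ℝ))) = 2 * s := by
    rw [show 2 * (2 * (n : ℝ)) = 4 * (n : ℝ) by ring, show (4 : ℝ) = 2 ^ 2 by norm_num,
      Real.sqrt_mul (by positivity), Real.sqrt_sq (by norm_num : (0:ℝ) ≤ 2)]
  have hsqrtn : Real.sqrt (2 * (n : ℝ)) ^ 2 = 2 * (n : ℝ) := Real.sq_sqrt (by positivity)
  have hpow2 : ((2 * (n : ℝ)) / Real.exp 1) ^ (2 * n) = 4 ^ n * (((n : ℝ) / Real.exp 1) ^ n) ^ 2 := by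
    rw [show (2 * (n : ℝ)) / Real.exp 1 = 2 * ((n : ℝ) / Real.exp 1) by ring, mul_pow,
      pow_mul, ← pow_mul ((n : ℝ) / Real.exp 1)]
    norm_num
    ring
  have hs2n : (0:ℝ) < Real.sqrt (2 * (n:ℝ)) := Real.sqrt_pos.mpr (by positivity)
  rw [hfac, hsqrt2, hpow2]
  field_simp
  ring_nf
  rw [Real.sq_sqrt (by positivity : (0:ℝ) ≤ (n:ℝ) * 2), hs, Real.sq_sqrt hn0.le]
  ring

open Stirling Filter in
lemma cb_asymp : Tendsto (fun n : ℕ => cb n * Real.sqrt n / 4 ^ n)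
    atTop (nhds (1 / Real.sqrt Real.pi)) := by
  have h2n : Tendsto (fun n : ℕ => 2 * n) atTop atTop :=
    Filter.tendsto_atTop_mono (fun n => by simp; omega) Filter.tendsto_id
  have h1 : Tendsto (fun n : ℕ => stirlingSeq (2 * n)) atTop (nhds (Real.sqrt Real.pi)) :=
    tendsto_stirlingSeq_sqrt_pi.comp h2n
  have h2 : Tendsto (fun n : ℕ => (stirlingSeq n) ^ 2) atTop
      (nhds ((Real.sqrt Real.pi) ^ 2)) := tendsto_stirlingSeq_sqrt_pi.pow 2
  have hπ : (0 : ℝ) < Real.sqrt Real.pi := Real.sqrt_pos.mpr Real.pi_pos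
  have h3 : Tendsto (fun n : ℕ => stirlingSeq (2 * n) / (stirlingSeq n) ^ 2) atTop
      (nhds (Real.sqrt Real.pi / (Real.sqrt Real.pi) ^ 2)) :=
    h1.div h2 (by positivity)
  have hval : Real.sqrt Real.pi / (Real.sqrt Real.pi) ^ 2 = 1 / Real.sqrt Real.pi := by
    field_simp
  rw [hval] at h3
  apply h3.congr'
  filter_upwards [Filter.eventually_ge_atTop 1] with n hn
  exact cb_stirling_eq hn

/-- `g m = (2m+1) cb m / 4^m`. -/
noncomputable def gs (m : ℕ) : ℝ := (2 * (m : ℝ) + 1) * cb m / 4 ^ m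

open Filter in
lemma gs_asymp : Tendsto (fun m : ℕ => gs m / Real.sqrt m) atTop
    (nhds (2 / Real.sqrt Real.pi)) := by
  have h1 : Tendsto (fun m : ℕ => (2 + 1 / (m : ℝ))) atTop (nhds 2) := by
    have := tendsto_one_div_atTop_nhds_zero_nat (𝕜 := ℝ)
    simpa using (tendsto_const_nhds (x := (2:ℝ)) (f := atTop)).add this
  have h2 := cb_asymp
  have h3 : Tendsto (fun m : ℕ => (2 + 1 / (m : ℝ)) * (cb m * Real.sqrt m / 4 ^ m)) atTop
      (nhds (2 * (1 / Real.sqrt Real.pi))) := h1.mul h2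
  have hval : 2 * (1 / Real.sqrt Real.pi) = 2 / Real.sqrt Real.pi := by ring
  rw [hval] at h3
  apply h3.congr'
  filter_upwards [Filter.eventually_ge_atTop 1] with m hm
  have hm0 : (0 : ℝ) < (m : ℝ) := by exact_mod_cast hm
  have hsm : (0 : ℝ) < Real.sqrt m := Real.sqrt_pos.mpr hm0
  have hss : Real.sqrt m * Real.sqrt m = (m : ℝ) := Real.mul_self_sqrt hm0.le
  rw [gs]
  field_simp
  ring_nf
  rw [Real.sq_sqrt hm0.le]

open Filter in
lemma gs_shift (k : ℕ) : Tendsto (fun n : ℕ => gs (n - k) / Real.sqrt ((n : ℝ) + 1))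
    atTop (nhds (2 / Real.sqrt Real.pi)) := by
  have h1 : Tendsto (fun n : ℕ => gs (n - k) / Real.sqrt ((n - k : ℕ) : ℝ)) atTop
      (nhds (2 / Real.sqrt Real.pi)) := gs_asymp.comp (tendsto_sub_atTop_nat k)
  have hinner : Tendsto (fun n : ℕ => 1 - ((k : ℝ) + 1) / ((n : ℝ) + 1)) atTop (nhds 1) := by
    have h0 : Tendsto (fun n : ℕ => ((k : ℝ) + 1) * (1 / ((n : ℝ) + 1))) atTop (nhds 0) := by
      simpa using tendsto_one_div_add_atTop_nhds_zero_nat.const_mul ((k : ℝ) + 1)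
    have := (tendsto_const_nhds (x := (1:ℝ)) (f := atTop (α := ℕ))).sub h0
    simpa [mul_one_div, div_eq_mul_inv] using this
  have h2 : Tendsto (fun n : ℕ => Real.sqrt (1 - ((k : ℝ) + 1) / ((n : ℝ) + 1))) atTop
      (nhds 1) := by
    have := (Real.continuous_sqrt.tendsto 1).comp hinner
    simpa [Function.comp_def] using this
  have h3 := h1.mul h2
  rw [mul_one] at h3
  apply h3.congr'
  filter_upwards [Filter.eventually_ge_atTop (k + 1)] with n hn
  have hnk : k ≤ n := by omega
  have hcast : ((n - k : ℕ) : ℝ) = (n : ℝ) - k := by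
    push_cast [Nat.cast_sub hnk]; ring
  have hpos : (0 : ℝ) < (n : ℝ) - k := by
    have : (k : ℝ) + 1 ≤ (n : ℝ) := by exact_mod_cast hn
    linarith
  have hn1 : (0 : ℝ) < (n : ℝ) + 1 := by positivity
  have hfrac : 1 - ((k : ℝ) + 1) / ((n : ℝ) + 1) = ((n : ℝ) - k) / ((n : ℝ) + 1) := by
    field_simp
    ring
  rw [hfrac, Real.sqrt_div hpos.le, hcast]
  have hne : Real.sqrt ((n:ℝ) - k) ≠ 0 := (Real.sqrt_pos.mpr hpos).ne'
  field_simp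

noncomputable def Fq (n k : ℕ) : ℝ :=
  if k ≤ n then (cb k / 16 ^ k) * (gs (n - k) / Real.sqrt ((n : ℝ) + 1)) else 0

lemma beta_summable : Summable fun k : ℕ => cb k / 16 ^ k := by
  apply ((summable_norm_cb_mul (by norm_num : (0:ℝ) ≤ 1/16) (by norm_num)).of_norm).congr
  intro k
  rw [div_pow, one_pow]
  ring

lemma beta_tsum : (∑' k : ℕ, cb k / 16 ^ k) = 1 / Real.sqrt (3 / 4) := by
  have h := (hasSum_B (by norm_num : (0:ℝ) ≤ 1/16) (by norm_num)).tsum_eq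
  have : (∑' k : ℕ, cb k / 16 ^ k) = ∑' k : ℕ, cb k * (1/16 : ℝ) ^ k := by
    apply tsum_congr; intro k; rw [div_pow, one_pow]; ring
  rw [this, h]
  norm_num

lemma gs_nonneg (m : ℕ) : 0 ≤ gs m := by
  have := cb_pos m
  rw [gs]
  positivity

open Filter in
lemma Fq_tendsto : Tendsto (fun n => ∑' k, Fq n k) atTop
    (nhds (∑' k : ℕ, (cb k / 16 ^ k) * (2 / Real.sqrt Real.pi))) := by
  apply tendsto_tsum_of_dominated_convergence
    (bound := fun k => (cb k / 16 ^ k) * Real.sqrt 2)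
  · exact beta_summable.mul_right _
  · intro k
    have h := (gs_shift k).const_mul (cb k / 16 ^ k)
    apply h.congr'
    filter_upwards [Filter.eventually_ge_atTop k] with n hn
    rw [Fq, if_pos hn]
  · apply Filter.Eventually.of_forall
    intro n k
    rw [Fq]
    split_ifs with hk
    · have hb : (0:ℝ) ≤ cb k / 16 ^ k := div_nonneg (cb_pos k).le (by positivity)
      rw [Real.norm_eq_abs, abs_of_nonneg (mul_nonneg hb
        (div_nonneg (gs_nonneg _) (Real.sqrt_nonneg _)))]
      apply mul_le_mul_of_nonneg_left _ hb
      have hn1 : (0:ℝ) < (n:ℝ) + 1 := by positivity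
      rw [div_le_iff₀ (Real.sqrt_pos.mpr hn1)]
      calc gs (n - k) ≤ Real.sqrt (2 * ((n - k : ℕ) : ℝ) + 1) := g_bound (n - k)
        _ ≤ Real.sqrt (2 * ((n : ℝ) + 1)) := by
            apply Real.sqrt_le_sqrt
            have : ((n - k : ℕ) : ℝ) ≤ (n : ℝ) := by exact_mod_cast Nat.sub_le n k
            linarith
        _ = Real.sqrt 2 * Real.sqrt ((n : ℝ) + 1) := Real.sqrt_mul (by norm_num) _
    · simp only [norm_zero]
      exact mul_nonneg (div_nonneg (cb_pos k).le (by positivity)) (Real.sqrt_nonneg 2)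

lemma tsum_Fq_eq (n : ℕ) : (∑' k, Fq n k) = ∑ k ∈ range (n + 1), Fq n k := by
  apply tsum_eq_sum
  intro b hb
  have : ¬ b ≤ n := by
    intro h
    exact hb (Finset.mem_range.mpr (Nat.lt_succ_of_le h))
  rw [Fq, if_neg this]

lemma EE_expr (n : ℕ) :
    EE (n + 1) / (4 ^ (n + 1) * Real.sqrt ((n : ℝ) + 1))
      = 3 / (2 * Real.sqrt Real.pi) / 4 * ∑' k, Fq n k := by
  rw [tsum_Fq_eq, show EE (n + 1) = 3 / (2 * Real.sqrt Real.pi) * Ew n from rfl, Ew,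
    Finset.mul_sum, Finset.mul_sum, Finset.sum_div]
  apply Finset.sum_congr rfl
  intro k hk
  have hk' : k ≤ n := Nat.lt_succ_iff.mp (Finset.mem_range.mp hk)
  rw [Fq, if_pos hk', gs]
  have h4 : (4 : ℝ) ^ (n + 1) = 4 * 4 ^ k * 4 ^ (n - k) := by
    rw [show n + 1 = 1 + k + (n - k) by omega, pow_add, pow_add, pow_one]
  have h16 : (16 : ℝ) ^ k = 4 ^ k * 4 ^ k := by
    rw [← mul_pow]; norm_num
  have hs : (0 : ℝ) < Real.sqrt ((n : ℝ) + 1) := Real.sqrt_pos.mpr (by positivity)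
  have h4k : (0 : ℝ) < (4 : ℝ) ^ k := by positivity
  have h4nk : (0 : ℝ) < (4 : ℝ) ^ (n - k) := by positivity
  rw [h4, h16]
  field_simp
  try exact Or.inl trivial

open Filter in
lemma EE_tendsto : Tendsto (fun n : ℕ => EE (n + 1) / (4 ^ (n + 1) * Real.sqrt ((n : ℝ) + 1)))
    atTop (nhds (Real.sqrt 3 / (2 * Real.pi))) := by
  have h := Fq_tendsto.const_mul (3 / (2 * Real.sqrt Real.pi) / 4)
  have hval : 3 / (2 * Real.sqrt Real.pi) / 4 * (∑' k : ℕ, (cb k / 16 ^ k) * (2 / Real.sqrt Real.pi))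
      = Real.sqrt 3 / (2 * Real.pi) := by
    rw [tsum_mul_right, beta_tsum]
    have e1 : Real.sqrt (3 / 4 : ℝ) = Real.sqrt 3 / 2 := by
      rw [Real.sqrt_div (by norm_num : (0:ℝ) ≤ 3) 4,
        show (4 : ℝ) = 2 ^ 2 by norm_num, Real.sqrt_sq (by norm_num : (0:ℝ) ≤ 2)]
    rw [e1]
    have hp : Real.sqrt Real.pi * Real.sqrt Real.pi = Real.pi :=
      Real.mul_self_sqrt Real.pi_pos.le
    have h3 : Real.sqrt 3 * Real.sqrt 3 = 3 := Real.mul_self_sqrt (by norm_num)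
    have h3p : (0 : ℝ) < Real.sqrt 3 := Real.sqrt_pos.mpr (by norm_num)
    have hpp : (0 : ℝ) < Real.sqrt Real.pi := Real.sqrt_pos.mpr Real.pi_pos
    have hpi : (0 : ℝ) < Real.pi := Real.pi_pos
    field_simp
    nlinarith [hp, h3]
  rw [hval] at h
  exact h.congr (fun n => (EE_expr n).symm)

theorem stmt_12 (C : ℕ → ℝ) (hC0 : C 0 = 0)
    (hgen : ∀ z ∈ Set.Ioo (0 : ℝ) (1 / 4),
      HasSum (fun p : ℕ => C p * z ^ p)
        ((3 / 2) * z / Real.sqrt (Real.pi * (1 - z) * (1 - 4 * z) ^ 3))) :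
    Filter.Tendsto (fun p : ℕ => (4 : ℝ) ^ (-(p : ℤ)) * (p : ℝ) ^ (-(1 / 2) : ℝ) * C p)
      Filter.atTop (nhds (Real.sqrt 3 / (2 * Real.pi))) := by
  have hCE : ∀ p, C p = EE p := by
    have hd := coeff_eq_zero (fun p => C p - EE p) ?_
    · intro p
      have := hd p
      linarith
    · intro z hz
      have h1 := hgen z hz
      have h2 := hasSum_EE hz
      have := h1.sub h2
      rw [sub_self] at this
      apply this.congr_fun
      intro p
      ring
  rw [← Filter.tendsto_add_atTop_iff_nat 1]
  apply EE_tendsto.congr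
  intro n
  have hcast : ((n + 1 : ℕ) : ℝ) = (n : ℝ) + 1 := by push_cast; ring
  have hzpow : (4 : ℝ) ^ (-((n + 1 : ℕ) : ℤ)) = ((4 : ℝ) ^ (n + 1))⁻¹ := by
    rw [zpow_neg, zpow_natCast]
  have hrpow : ((n + 1 : ℕ) : ℝ) ^ (-(1 / 2) : ℝ) = (Real.sqrt ((n : ℝ) + 1))⁻¹ := by
    rw [hcast, Real.rpow_neg (by positivity), Real.sqrt_eq_rpow]
  rw [hCE, hzpow, hrpow]
  have h4 : (0 : ℝ) < (4 : ℝ) ^ (n + 1) := by positivity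
  have hs : (0 : ℝ) < Real.sqrt ((n : ℝ) + 1) := Real.sqrt_pos.mpr (by positivity)
  field_simp
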